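/- Let D : Fin 3 → Fin 3 → Fin 3 → ℝ be the 3×3×3 tensor whose frontal slices (rows indexed by i, columns by j, slice index k, all 1-based) are: for k = 1 the matrix (1/2)·[[0,1,1],[1,1,0],[1,0,1]]; for k = 2 the matrix (1/2)·[[1,1,0],[0,1,1],[1,0,1]]; for k = 3 the matrix (1/2)·[[1,0,1],[1,0,1],[0,2,0]]. Then D is line-stochastic, Per(D) = 0, and D does not belong to the convex hull, in the real vector space of functions Fin 3 → Fin 3 → Fin 3 → ℝ, of the set of 3×3×3 line-permutation tensors. -/

import Mathlib

/-- A family `π : Fin n → Equiv.Perm (Fin n)` is discordant if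
`π k i ≠ π l i` for all `k ≠ l` and all `i`. -/
def Discordant {n : ℕ} (π : Fin n → Equiv.Perm (Fin n)) : Prop :=
  ∀ k l, k ≠ l → ∀ i, π k i ≠ π l i

instance {n : ℕ} : DecidablePred (Discordant (n := n)) := fun _ =>
  inferInstanceAs (Decidable (∀ _ _, _ → ∀ _, _))

/-- The 2-permanent of an `n × n × n` tensor. -/
noncomputable def Per2 {n : ℕ} (A : Fin n → Fin n → Fin n → ℝ) : ℝ :=
  ∑ π ∈ Finset.univ.filter (fun π : Fin n → Equiv.Perm (Fin n) => Discordant π),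
    ∏ k : Fin n, ∏ i : Fin n, A i (π k i) k

/-- An `n × n × n` tensor is line-stochastic if all its entries are nonnegative
and all its line sums equal 1. -/
def LineStochastic {n : ℕ} (A : Fin n → Fin n → Fin n → ℝ) : Prop :=
  (∀ i j k, 0 ≤ A i j k) ∧
  (∀ j k, ∑ i, A i j k = 1) ∧
  (∀ i k, ∑ j, A i j k = 1) ∧
  (∀ i j, ∑ k, A i j k = 1)

/-- A line-permutation tensor is a line-stochastic tensor with (0,1)-entries. -/
def LinePermutationTensor {n : ℕ} (A : Fin n → Fin n → Fin n → ℝ) : Prop :=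
  LineStochastic A ∧ ∀ i j k, A i j k = 0 ∨ A i j k = 1

/-- The `3 × 3 × 3` tensor `D` given by its three frontal slices
(rows indexed by `i`, columns by `j`, slice index `k`). -/
noncomputable def D : Fin 3 → Fin 3 → Fin 3 → ℝ := fun i j k =>
  (1 / 2) *
    (![!![0, 1, 1; 1, 1, 0; 1, 0, 1],
       !![1, 1, 0; 0, 1, 1; 1, 0, 1],
       !![1, 0, 1; 1, 0, 1; 0, 2, 0]] k) i j

/-- `D` is line-stochastic with `Per D = 0`, yet `D` is not a convex combination
of `3 × 3 × 3` line-permutation tensors. -/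
theorem D_lineStochastic_Per_zero_not_in_convexHull :
    LineStochastic D ∧ Per2 D = 0 ∧
    D ∉ convexHull ℝ {A : Fin 3 → Fin 3 → Fin 3 → ℝ | LinePermutationTensor A} := by
  have hLS : LineStochastic D := by
    refine ⟨?_, ?_, ?_, ?_⟩
    · intro i j k; fin_cases i <;> fin_cases j <;> fin_cases k <;> norm_num [D]
    · intro j k; fin_cases j <;> fin_cases k <;>
        simp [D, Fin.sum_univ_three, Matrix.vecHead, Matrix.vecTail] <;> norm_num
    · intro i k; fin_cases i <;> fin_cases k <;>
        simp [D, Fin.sum_univ_three, Matrix.vecHead, Matrix.vecTail] <;> norm_num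
    · intro i j; fin_cases i <;> fin_cases j <;>
        simp [D, Fin.sum_univ_three, Matrix.vecHead, Matrix.vecTail] <;> norm_num
  refine ⟨hLS, ?_, ?_⟩
  · -- Per2 D = 0
    apply Finset.sum_eq_zero
    intro π hπ
    rw [Finset.mem_filter] at hπ
    have hd : ∀ i, π 0 i ≠ π 1 i := hπ.2 0 1 (by decide)
    have key : ∀ σ0 σ1 : Equiv.Perm (Fin 3), (∀ i, σ0 i ≠ σ1 i) →
        (σ0 0 = 0 ∨ σ0 1 = 2 ∨ σ0 2 = 1) ∨ (σ1 0 = 2 ∨ σ1 1 = 0 ∨ σ1 2 = 1) := by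
      decide
    rcases key (π 0) (π 1) hd with (h | h | h) | (h | h | h)
    · exact Finset.prod_eq_zero (Finset.mem_univ (0 : Fin 3))
        (Finset.prod_eq_zero (Finset.mem_univ (0 : Fin 3)) (by rw [h]; norm_num [D]))
    · exact Finset.prod_eq_zero (Finset.mem_univ (0 : Fin 3))
        (Finset.prod_eq_zero (Finset.mem_univ (1 : Fin 3)) (by rw [h]; simp [D, Matrix.cons_val]))
    · exact Finset.prod_eq_zero (Finset.mem_univ (0 : Fin 3))
        (Finset.prod_eq_zero (Finset.mem_univ (2 : Fin 3)) (by rw [h]; simp [D, Matrix.cons_val]))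
    · exact Finset.prod_eq_zero (Finset.mem_univ (1 : Fin 3))
        (Finset.prod_eq_zero (Finset.mem_univ (0 : Fin 3)) (by rw [h]; simp [D, Matrix.cons_val]))
    · exact Finset.prod_eq_zero (Finset.mem_univ (1 : Fin 3))
        (Finset.prod_eq_zero (Finset.mem_univ (1 : Fin 3)) (by rw [h]; norm_num [D]))
    · exact Finset.prod_eq_zero (Finset.mem_univ (1 : Fin 3))
        (Finset.prod_eq_zero (Finset.mem_univ (2 : Fin 3)) (by rw [h]; simp [D, Matrix.cons_val]))
  · -- not in convex hull
    intro hmem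
    rw [convexHull_eq] at hmem
    obtain ⟨ι, t, w, z, hw0, hw1, hzs, hcm⟩ := hmem
    rw [Finset.centerMass_eq_of_sum_1 _ _ hw1] at hcm
    obtain ⟨i0, hi0t, hi0⟩ : ∃ i ∈ t, 0 < w i := by
      by_contra hc
      push_neg at hc
      have : ∑ i ∈ t, w i = 0 := Finset.sum_eq_zero fun i hi =>
        le_antisymm (hc i hi) (hw0 i hi)
      rw [hw1] at this; norm_num at this
    set A := z i0 with hA
    have hAmem : LinePermutationTensor A := hzs i0 hi0t
    -- zero entries of D force zero entries of A
    have hzero : ∀ i j k, D i j k = 0 → A i j k = 0 := by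
      intro i j k hD
      have hsum : ∑ l ∈ t, w l * z l i j k = 0 := by
        have h := congrFun (congrFun (congrFun hcm i) j) k
        rw [hD] at h
        simpa [Finset.sum_apply, smul_eq_mul] using h
      have hnn : ∀ l ∈ t, 0 ≤ w l * z l i j k := fun l hl =>
        mul_nonneg (hw0 l hl) ((hzs l hl).1.1 i j k)
      have := (Finset.sum_eq_zero_iff_of_nonneg hnn).1 hsum i0 hi0t
      have hne : w i0 ≠ 0 := ne_of_gt hi0
      exact (mul_eq_zero.1 this).resolve_left hne
    obtain ⟨⟨_, hcol, hrow, htube⟩, h01⟩ := hAmem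
    have z1 : A 2 1 0 = 0 := hzero 2 1 0 (by simp [D, Matrix.cons_val])
    have z2 : A 1 2 0 = 0 := hzero 1 2 0 (by simp [D, Matrix.cons_val])
    have z3 : A 0 0 0 = 0 := hzero 0 0 0 (by norm_num [D])
    have z4 : A 1 1 2 = 0 := hzero 1 1 2 (by simp [D, Matrix.cons_val])
    have z5 : A 0 2 1 = 0 := hzero 0 2 1 (by simp [D, Matrix.cons_val])
    have z6 : A 1 0 1 = 0 := hzero 1 0 1 (by norm_num [D])
    have z7 : A 2 1 1 = 0 := hzero 2 1 1 (by simp [D, Matrix.cons_val])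
    have z8 : A 2 2 2 = 0 := hzero 2 2 2 (by simp [D, Matrix.cons_val])
    have e1 := hcol 1 0
    have e2 := hrow 1 0
    have e3 := hcol 0 0
    have e4 := hrow 2 0
    have e5 := hcol 1 1
    have e6 := htube 1 1
    have e7 := hrow 0 1
    have e8 := hcol 0 1
    have e9 := hrow 2 1
    have e10 := htube 2 2
    rw [Fin.sum_univ_three] at e1 e2 e3 e4 e5 e6 e7 e8 e9 e10
    rcases h01 0 1 0 with h | h <;> linarith
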